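/- Fix an integer q ≥ 2 and let b_m denote the number of 1-unbordered words of length m over ℤ/qℤ. Then b_0 = 1, b_{2n+1} = q·b_{2n} for all n ≥ 0, and b_{2n} = q·b_{2n-1} − 2·b_n for all n ≥ 1. -/

import Mathlib

/-- For a word `W` over `ℤ/qℤ`, `addOneFirst W` is the word `W'` obtained by adding `1`
to the first letter of `W` (and the empty word for the empty word). -/
def addOneFirst {q : ℕ} : List (ZMod q) → List (ZMod q)
  | [] => []
  | x :: xs => (x + 1) :: xs

/-- A word `W` over `ℤ/qℤ` is 1-unbordered if no nonempty proper suffix of `W` is equal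
to a prefix of `W` or to a prefix of `W'` (where `W'` is `W` with `1` added to its first
letter). -/
def OneUnbordered {q : ℕ} (W : List (ZMod q)) : Prop :=
  ∀ S : List (ZMod q), S ≠ [] → S.length < W.length → S <:+ W →
    ¬ S <+: W ∧ ¬ S <+: addOneFirst W

/-- The number of 1-unbordered words of length `m` over `ℤ/qℤ`. -/
noncomputable def countOneUnbordered (q m : ℕ) : ℕ :=
  Nat.card {w : List (ZMod q) // w.length = m ∧ OneUnbordered w}

section helpers
variable {q : ℕ}

/-- `gd W i` is the `i`-th letter of `W` (with junk value `0` out of range). -/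
def gd (W : List (ZMod q)) (i : ℕ) : ZMod q := W.getD i 0

lemma gd_eq {W : List (ZMod q)} {i : ℕ} (h : i < W.length) : gd W i = W[i] :=
  List.getD_eq_getElem W 0 h

lemma ext_gd {l₁ l₂ : List (ZMod q)} (h : l₁.length = l₂.length)
    (hg : ∀ i < l₁.length, gd l₁ i = gd l₂ i) : l₁ = l₂ := by
  apply List.ext_getElem h
  intro i h1 h2
  rw [← gd_eq h1, ← gd_eq h2]
  exact hg i h1

lemma gd_take {W : List (ZMod q)} {k i : ℕ} (h : i < k) : gd (W.take k) i = gd W i := by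
  simp [gd, List.getD_eq_getElem?_getD, List.getElem?_take, h]

lemma gd_drop (W : List (ZMod q)) (p i : ℕ) : gd (W.drop p) i = gd W (p + i) := by
  simp [gd, List.getD_eq_getElem?_getD, List.getElem?_drop]

lemma gd_append {S T : List (ZMod q)} {i : ℕ} (h : i < S.length) :
    gd (S ++ T) i = gd S i := by
  simp [gd, List.getD_eq_getElem?_getD, List.getElem?_append, h]

lemma gd_append_right (S T : List (ZMod q)) (i : ℕ) :
    gd (S ++ T) (S.length + i) = gd T i := by
  simp [gd, List.getD_eq_getElem?_getD, List.getElem?_append_right]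

lemma gd_append_right' {S T : List (ZMod q)} {i : ℕ} (h : S.length ≤ i) :
    gd (S ++ T) i = gd T (i - S.length) := by
  conv_lhs => rw [show i = S.length + (i - S.length) by omega]
  rw [gd_append_right]

@[simp] lemma length_addOneFirst (W : List (ZMod q)) : (addOneFirst W).length = W.length := by
  cases W <;> simp [addOneFirst]

lemma gd_addOneFirst_zero {W : List (ZMod q)} (h : W ≠ []) :
    gd (addOneFirst W) 0 = gd W 0 + 1 := by
  cases W with
  | nil => exact absurd rfl h
  | cons x xs => simp [addOneFirst, gd]

lemma gd_addOneFirst_pos {W : List (ZMod q)} {i : ℕ} (h : 0 < i) :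
    gd (addOneFirst W) i = gd W i := by
  obtain ⟨j, rfl⟩ := Nat.exists_eq_add_of_lt h
  cases W <;> simp [addOneFirst, gd]

/-- `Bd ε W k` : the suffix of `W` of length `k` agrees with the prefix of length `k`
except that the first letter is shifted by `ε`. -/
def Bd (ε : ZMod q) (W : List (ZMod q)) (k : ℕ) : Prop :=
  gd W (W.length - k) = gd W 0 + ε ∧
  ∀ i, 0 < i → i < k → gd W (W.length - k + i) = gd W i

/-- `W` has a 1-border of length `k`. -/
def Bord (W : List (ZMod q)) (k : ℕ) : Prop := Bd 0 W k ∨ Bd 1 W k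

lemma OU_iff (W : List (ZMod q)) :
    OneUnbordered W ↔ ∀ k, 0 < k → k < W.length → ¬ Bord W k := by
  constructor
  · intro h k hk hkm hb
    have hlen : (W.drop (W.length - k)).length = k := by simp; omega
    have hne : W.drop (W.length - k) ≠ [] := by
      intro e; rw [e] at hlen; simp at hlen; omega
    obtain ⟨h1, h2⟩ := h _ hne (by omega) (List.drop_suffix _ _)
    rcases hb with hb | hb
    · apply h1
      have he : W.drop (W.length - k) = W.take k := by
        apply ext_gd (by rw [hlen]; simp; omega)
        intro i hi
        rw [hlen] at hi
        rw [gd_drop, gd_take hi]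
        rcases Nat.eq_zero_or_pos i with rfl | hipos
        · simpa using hb.1
        · exact hb.2 i hipos hi
      rw [he]; exact List.take_prefix _ _
    · apply h2
      have hWne : W ≠ [] := by
        intro e; rw [e] at hkm; simp at hkm
      have he : W.drop (W.length - k) = (addOneFirst W).take k := by
        apply ext_gd (by rw [hlen]; simp; omega)
        intro i hi
        rw [hlen] at hi
        rw [gd_drop, gd_take hi]
        rcases Nat.eq_zero_or_pos i with rfl | hipos
        · rw [gd_addOneFirst_zero hWne]; simpa using hb.1
        · rw [gd_addOneFirst_pos hipos]; exact hb.2 i hipos hi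
      rw [he]; exact List.take_prefix _ _
  · intro h S hne hlen hsuf
    have hk : 0 < S.length := List.length_pos_iff.mpr hne
    have hSd : S = W.drop (W.length - S.length) := List.suffix_iff_eq_drop.mp hsuf
    have hWne : W ≠ [] := by intro e; rw [e] at hlen; simp at hlen
    constructor
    · intro hpre
      apply h S.length hk hlen
      left
      have hSt : S = W.take S.length := List.prefix_iff_eq_take.mp hpre
      have key : ∀ i < S.length, gd W (W.length - S.length + i) = gd W i := by
        intro i hi
        have := congrArg (fun L => gd L i) (hSd.symm.trans hSt)
        simpa [gd_drop, gd_take hi] using this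
      exact ⟨by simpa using key 0 hk, fun i h1 h2 => key i h2⟩
    · intro hpre
      apply h S.length hk hlen
      right
      have hSt : S = (addOneFirst W).take S.length := List.prefix_iff_eq_take.mp hpre
      have key : ∀ i < S.length, gd W (W.length - S.length + i) = gd (addOneFirst W) i := by
        intro i hi
        have := congrArg (fun L => gd L i) (hSd.symm.trans hSt)
        simpa [gd_drop, gd_take hi] using this
      constructor
      · have := key 0 hk
        rw [gd_addOneFirst_zero hWne] at this
        simpa using this
      · intro i h1 h2
        rw [key i h2, gd_addOneFirst_pos h1]

end helpers

section reduce
variable {q : ℕ}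

lemma bd_reduce {ε : ZMod q} {W : List (ZMod q)} {k : ℕ} (hk : 0 < k) (hkm : k < W.length)
    (h2 : W.length < 2 * k) (hb : Bd ε W k) : Bd ε W (2 * k - W.length) := by
  obtain ⟨hb1, hb2⟩ := hb
  have hp : 0 < W.length - k := by omega
  constructor
  · have e1 : W.length - (2 * k - W.length) = (W.length - k) + (W.length - k) := by omega
    rw [e1, hb2 (W.length - k) hp (by omega), hb1]
  · intro i hi1 hi2
    have e1 : W.length - (2 * k - W.length) + i = (W.length - k) + ((W.length - k) + i) := by
      omega
    rw [e1, hb2 ((W.length - k) + i) (by omega) (by omega), hb2 i hi1 (by omega)]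

lemma bd_half {ε : ZMod q} {W : List (ZMod q)} :
    ∀ k, 0 < k → k < W.length → Bd ε W k →
      ∃ j, 0 < j ∧ 2 * j ≤ W.length ∧ Bd ε W j := by
  intro k
  induction k using Nat.strong_induction_on with
  | _ k ih =>
    intro hk hkm hb
    by_cases h : 2 * k ≤ W.length
    · exact ⟨k, hk, h, hb⟩
    · exact ih (2 * k - W.length) (by omega) (by omega) (by omega)
        (bd_reduce hk hkm (by omega) hb)

lemma OU_iff_half (W : List (ZMod q)) :
    OneUnbordered W ↔ ∀ k, 0 < k → 2 * k ≤ W.length → ¬ Bord W k := by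
  rw [OU_iff]
  constructor
  · intro h k hk h2
    exact h k hk (by omega)
  · intro h k hk hkm hb
    rcases hb with hb | hb
    · obtain ⟨j, hj, hj2, hbj⟩ := bd_half k hk hkm hb
      exact h j hj hj2 (Or.inl hbj)
    · obtain ⟨j, hj, hj2, hbj⟩ := bd_half k hk hkm hb
      exact h j hj hj2 (Or.inr hbj)

lemma gd_eraseIdx_lt {W : List (ZMod q)} {p j : ℕ} (hj : j < p) (hjm : j < W.length) :
    gd (W.eraseIdx p) j = gd W j := by
  rw [List.eraseIdx_eq_take_drop_succ, gd_append (by simp; omega), gd_take hj]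

lemma gd_eraseIdx_ge {W : List (ZMod q)} {p j : ℕ} (hp : p ≤ j) (hj : j + 1 < W.length) :
    gd (W.eraseIdx p) j = gd W (j + 1) := by
  rw [List.eraseIdx_eq_take_drop_succ]
  have hlt : (W.take p).length = p := by simp; omega
  have e1 : j = (W.take p).length + (j - p) := by rw [hlt]; omega
  rw [e1, gd_append_right, gd_drop]
  congr 1
  rw [hlt]; omega

lemma bd_erase {ε : ZMod q} {W : List (ZMod q)} {k : ℕ} (hk : 0 < k) (h2 : 2 * k < W.length) :
    Bd ε (W.eraseIdx (W.length / 2)) k ↔ Bd ε W k := by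
  have hlen : (W.eraseIdx (W.length / 2)).length = W.length - 1 := by
    rw [List.length_eraseIdx, if_pos (by omega)]
  have e0 : gd (W.eraseIdx (W.length / 2)) 0 = gd W 0 := gd_eraseIdx_lt (by omega) (by omega)
  have h1 : gd (W.eraseIdx (W.length / 2)) ((W.eraseIdx (W.length / 2)).length - k)
      = gd W (W.length - k) := by
    rw [hlen, gd_eraseIdx_ge (by omega) (by omega)]
    congr 1
    omega
  have h3 : ∀ i, i < k → gd (W.eraseIdx (W.length / 2)) i = gd W i := fun i hi =>
    gd_eraseIdx_lt (by omega) (by omega)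
  have h2' : ∀ i, i < k → gd (W.eraseIdx (W.length / 2)) ((W.eraseIdx (W.length / 2)).length - k + i)
      = gd W (W.length - k + i) := by
    intro i hi
    rw [hlen, gd_eraseIdx_ge (by omega) (by omega)]
    congr 1
    omega
  constructor
  · rintro ⟨a, b⟩
    refine ⟨by rw [← h1, a, e0], fun i p1 p2 => by rw [← h2' i p2, b i p1 p2, h3 i p2]⟩
  · rintro ⟨a, b⟩
    refine ⟨by rw [h1, e0, a], fun i p1 p2 => by rw [h2' i p2, h3 i p2, b i p1 p2]⟩

lemma bord_erase {W : List (ZMod q)} {k : ℕ} (hk : 0 < k) (h2 : 2 * k < W.length) :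
    Bord (W.eraseIdx (W.length / 2)) k ↔ Bord W k :=
  or_congr (bd_erase hk h2) (bd_erase hk h2)

lemma OU_erase (W : List (ZMod q)) :
    OneUnbordered W ↔
      OneUnbordered (W.eraseIdx (W.length / 2)) ∧
        (∀ k, 0 < k → 2 * k = W.length → ¬ Bord W k) := by
  have hlenE : (W.eraseIdx (W.length / 2)).length = W.length - 1 := by
    rw [List.length_eraseIdx]; split <;> omega
  rw [OU_iff_half W, OU_iff_half]
  constructor
  · intro h
    refine ⟨?_, fun k hk hkm => h k hk (by omega)⟩
    intro k hk h2k
    rw [hlenE] at h2k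
    rw [bord_erase hk (by omega)]
    exact h k hk (by omega)
  · rintro ⟨h1, h2⟩ k hk h2k
    rcases Nat.lt_or_ge (2 * k) W.length with hlt | hge
    · rw [← bord_erase hk hlt]
      exact h1 k hk (by rw [hlenE]; omega)
    · exact h2 k hk (by omega)

lemma OU_erase_odd {W : List (ZMod q)} {n : ℕ} (h : W.length = 2 * n + 1) :
    OneUnbordered W ↔ OneUnbordered (W.eraseIdx n) := by
  have hn : W.eraseIdx n = W.eraseIdx (W.length / 2) := by rw [h]; congr 1; omega
  rw [hn, OU_erase W]
  have : ∀ k, 0 < k → 2 * k = W.length → ¬ Bord W k := by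
    intro k hk hkm
    omega
  exact ⟨fun h' => h'.1, fun h' => ⟨h', this⟩⟩

lemma OU_erase_even {W : List (ZMod q)} {n : ℕ} (hn : 1 ≤ n) (h : W.length = 2 * n) :
    OneUnbordered W ↔ OneUnbordered (W.eraseIdx n) ∧ ¬ Bord W n := by
  have he : W.eraseIdx n = W.eraseIdx (W.length / 2) := by rw [h]; congr 1; omega
  rw [he, OU_erase W]
  constructor
  · rintro ⟨a, b⟩
    exact ⟨a, b n hn (by omega)⟩
  · rintro ⟨a, b⟩
    refine ⟨a, fun k hk hkm => ?_⟩
    have : k = n := by omega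
    rwa [this]

section counting
variable {q : ℕ}

lemma insertIdx_gd_eraseIdx {W : List (ZMod q)} {j : ℕ} (hj : j < W.length) :
    (W.eraseIdx j).insertIdx j (gd W j) = W := by
  induction W generalizing j with
  | nil => simp at hj
  | cons x xs ih =>
    cases j with
    | zero => simp [gd, List.insertIdx]
    | succ j =>
      have hj' : j < xs.length := by simpa using hj
      simp only [List.eraseIdx_cons_succ, List.insertIdx_succ_cons]
      rw [show gd (x :: xs) (j+1) = gd xs j from rfl, ih hj']

lemma gd_insertIdx_self {U : List (ZMod q)} {j : ℕ} (a : ZMod q) (hj : j ≤ U.length) :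
    gd (U.insertIdx j a) j = a := by
  rw [gd_eq (by rw [List.length_insertIdx_of_le_length hj]; omega)]
  exact List.getElem_insertIdx_self _

lemma finite_words [NeZero q] (m : ℕ) (P : List (ZMod q) → Prop) :
    Finite {w : List (ZMod q) // w.length = m ∧ P w} := by
  apply Finite.of_injective (fun w => (fun i => gd w.1 i : Fin m → ZMod q))
  rintro ⟨w1, h1, _⟩ ⟨w2, h2, _⟩ h
  apply Subtype.ext
  dsimp only
  apply ext_gd (by rw [h1, h2])
  intro i hi
  rw [h1] at hi
  exact congrFun h ⟨i, hi⟩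

lemma card_insert [NeZero q] (m j : ℕ) (hj : j ≤ m) (P : List (ZMod q) → Prop) :
    Nat.card {w : List (ZMod q) // w.length = m + 1 ∧ P (w.eraseIdx j)} =
      q * Nat.card {w : List (ZMod q) // w.length = m ∧ P w} := by
  have e : {w : List (ZMod q) // w.length = m + 1 ∧ P (w.eraseIdx j)} ≃
      (ZMod q) × {w : List (ZMod q) // w.length = m ∧ P w} :=
    { toFun := fun w => (gd w.1 j,
        ⟨w.1.eraseIdx j,
          by have h := w.2.1; rw [List.length_eraseIdx, if_pos (by omega)]; omega,
          w.2.2⟩)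
      invFun := fun p =>
        ⟨p.2.1.insertIdx j p.1,
          by rw [List.length_insertIdx_of_le_length (by rw [p.2.2.1]; omega), p.2.2.1],
          by rw [List.eraseIdx_insertIdx_self]; exact p.2.2.2⟩
      left_inv := fun w => by
        apply Subtype.ext
        exact insertIdx_gd_eraseIdx (by have h := w.2.1; omega)
      right_inv := fun p => by
        have h1 : j ≤ p.2.1.length := by rw [p.2.2.1]; omega
        refine Prod.ext ?_ (Subtype.ext ?_) <;> dsimp
        · rw [gd_insertIdx_self _ h1]
        · rw [List.eraseIdx_insertIdx_self] }
  rw [Nat.card_congr e, Nat.card_prod, Nat.card_zmod]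

lemma OU_nil : OneUnbordered ([] : List (ZMod q)) := by
  intro S hS hlen
  simp at hlen

lemma count_zero : countOneUnbordered q 0 = 1 := by
  haveI : Unique {w : List (ZMod q) // w.length = 0 ∧ OneUnbordered w} :=
    { default := ⟨[], rfl, OU_nil⟩
      uniq := fun w => Subtype.ext (List.length_eq_zero_iff.mp w.2.1) }
  exact Nat.card_unique

lemma step_odd [NeZero q] (n : ℕ) :
    countOneUnbordered q (2 * n + 1) = q * countOneUnbordered q (2 * n) := by
  unfold countOneUnbordered
  have e : {w : List (ZMod q) // w.length = 2 * n + 1 ∧ OneUnbordered w} ≃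
      {w : List (ZMod q) // w.length = 2 * n + 1 ∧ OneUnbordered (w.eraseIdx n)} :=
    Equiv.subtypeEquivRight (fun w => and_congr_right fun h => OU_erase_odd h)
  rw [Nat.card_congr e, card_insert (2 * n) n (by omega)]

end counting

section even
variable {q : ℕ}

def subOneFirst : List (ZMod q) → List (ZMod q)
  | [] => []
  | x :: xs => (x - 1) :: xs

/-- "(-1)-borders". -/
def BordM (W : List (ZMod q)) (k : ℕ) : Prop := Bd 0 W k ∨ Bd (-1) W k

/-- "(-1)-unbordered" words. -/
def OUm (W : List (ZMod q)) : Prop := ∀ k, 0 < k → k < W.length → ¬ BordM W k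

@[simp] lemma length_subOneFirst (L : List (ZMod q)) : (subOneFirst L).length = L.length := by
  cases L <;> simp [subOneFirst]

lemma gd_subOneFirst_zero {L : List (ZMod q)} (h : L ≠ []) :
    gd (subOneFirst L) 0 = gd L 0 - 1 := by
  cases L with
  | nil => exact absurd rfl h
  | cons x xs => simp [subOneFirst, gd]

lemma gd_subOneFirst_pos {L : List (ZMod q)} {i : ℕ} (h : 0 < i) :
    gd (subOneFirst L) i = gd L i := by
  obtain ⟨j, rfl⟩ := Nat.exists_eq_add_of_lt h
  cases L <;> simp [subOneFirst, gd]

lemma gd_neg {W : List (ZMod q)} {i : ℕ} (h : i < W.length) :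
    gd (W.map (fun x => -x)) i = - gd W i := by
  rw [gd_eq (by simpa using h), gd_eq h, List.getElem_map]

lemma NN (w : List (ZMod q)) : (w.map (fun x => -x)).map (fun x => -x) = w := by
  rw [List.map_map]
  simp [Function.comp]

lemma OU_neg_iff (W : List (ZMod q)) :
    OneUnbordered (W.map (fun x => -x)) ↔ OUm W := by
  rw [OU_iff]
  have hlen : (W.map (fun x => -x)).length = W.length := by simp
  unfold OUm
  constructor
  · intro h k hk hkm
    have hh := h k hk (by omega)
    intro hb
    apply hh
    rcases hb with ⟨a, b⟩ | ⟨a, b⟩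
    · left
      refine ⟨?_, fun i p1 p2 => ?_⟩
      · rw [hlen, gd_neg (by omega), gd_neg (by omega), a]; ring
      · rw [hlen, gd_neg (by omega), gd_neg (by omega), b i p1 p2]
    · right
      refine ⟨?_, fun i p1 p2 => ?_⟩
      · rw [hlen, gd_neg (by omega), gd_neg (by omega), a]; ring
      · rw [hlen, gd_neg (by omega), gd_neg (by omega), b i p1 p2]
  · intro h k hk hkm
    rw [hlen] at hkm
    have hh := h k hk hkm
    intro hb
    apply hh
    rcases hb with ⟨a, b⟩ | ⟨a, b⟩
    · rw [hlen] at a b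
      left
      refine ⟨?_, fun i p1 p2 => ?_⟩
      · have a' := a
        rw [gd_neg (by omega), gd_neg (by omega)] at a'
        have : -(- gd W (W.length - k)) = -(- gd W 0 + 0) := by rw [a']
        simpa using this
      · have b' := b i p1 p2
        rw [gd_neg (by omega), gd_neg (by omega)] at b'
        have : -(- gd W (W.length - k + i)) = -(- gd W i) := by rw [b']
        simpa using this
    · rw [hlen] at a b
      right
      refine ⟨?_, fun i p1 p2 => ?_⟩
      · have a' := a
        rw [gd_neg (by omega), gd_neg (by omega)] at a'
        linear_combination -a'
      · have b' := b i p1 p2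
        rw [gd_neg (by omega), gd_neg (by omega)] at b'
        have : -(- gd W (W.length - k + i)) = -(- gd W i) := by rw [b']
        simpa using this

end even

section keylemmas
variable {q : ℕ}

lemma key0 {S : List (ZMod q)} {n : ℕ} (hn : 1 ≤ n) (hS : S.length = n) :
    OneUnbordered ((S ++ S).eraseIdx n) ↔ OneUnbordered S := by
  have hSS : (S ++ S).length = 2 * n := by rw [List.length_append, hS]; omega
  have hU : ((S ++ S).eraseIdx n).length = 2 * n - 1 := by
    rw [List.length_eraseIdx, if_pos (by omega)]; omega
  have gdlt : ∀ j, j < n → gd ((S ++ S).eraseIdx n) j = gd S j := by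
    intro j hj
    rw [gd_eraseIdx_lt hj (by omega), gd_append (by omega)]
  have gdge : ∀ j, n ≤ j → j < 2 * n - 1 → gd ((S ++ S).eraseIdx n) j = gd S (j + 1 - n) := by
    intro j h1 h2
    rw [gd_eraseIdx_ge h1 (by omega), gd_append_right' (by omega)]
    congr 1
    omega
  have bdiff : ∀ (ε : ZMod q) k, 0 < k → k ≤ n - 1 →
      (Bd ε ((S ++ S).eraseIdx n) k ↔ Bd ε S k) := by
    intro ε k hk hkn
    unfold Bd
    rw [hU, hS]
    have i1 : gd ((S ++ S).eraseIdx n) (2 * n - 1 - k) = gd S (n - k) := by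
      rw [gdge _ (by omega) (by omega)]; congr 1; omega
    have i0 : gd ((S ++ S).eraseIdx n) 0 = gd S 0 := gdlt 0 (by omega)
    have i2 : ∀ i, 0 < i → i < k →
        gd ((S ++ S).eraseIdx n) (2 * n - 1 - k + i) = gd S (n - k + i) := by
      intro i hi1 hi2
      rw [gdge _ (by omega) (by omega)]; congr 1; omega
    have i3 : ∀ i, i < k → gd ((S ++ S).eraseIdx n) i = gd S i := fun i hi => gdlt i (by omega)
    constructor
    · rintro ⟨a, b⟩
      exact ⟨by rw [← i1, a, i0], fun i p1 p2 => by rw [← i2 i p1 p2, b i p1 p2, i3 i p2]⟩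
    · rintro ⟨a, b⟩
      refine ⟨by rw [i1, i0]; exact a, fun i p1 p2 => ?_⟩
      rw [i2 i p1 p2, i3 i p2]
      exact b i p1 p2
  rw [OU_iff_half, OU_iff]
  constructor
  · intro h k hk hkm
    rw [hS] at hkm
    intro hb
    exact h k hk (by rw [hU]; omega)
      ((or_congr (bdiff 0 k hk (by omega)) (bdiff 1 k hk (by omega))).mpr hb)
  · intro h k hk hkm
    rw [hU] at hkm
    intro hb
    exact h k hk (by omega)
      ((or_congr (bdiff 0 k hk (by omega)) (bdiff 1 k hk (by omega))).mp hb)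

lemma key1 {S : List (ZMod q)} {n : ℕ} (hn : 1 ≤ n) (hS : S.length = n) :
    OneUnbordered ((subOneFirst (S ++ S)).eraseIdx n) ↔ OUm S := by
  have hSne : S ++ S ≠ [] := by
    intro e
    have := congrArg List.length e
    simp [hS] at this
    omega
  have hW0 : (subOneFirst (S ++ S)).length = 2 * n := by
    rw [length_subOneFirst, List.length_append, hS]; omega
  have hU : ((subOneFirst (S ++ S)).eraseIdx n).length = 2 * n - 1 := by
    rw [List.length_eraseIdx, if_pos (by omega)]; omega
  have gd0 : gd ((subOneFirst (S ++ S)).eraseIdx n) 0 = gd S 0 - 1 := by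
    rw [gd_eraseIdx_lt (by omega) (by omega), gd_subOneFirst_zero hSne, gd_append (by omega)]
  have gdlt : ∀ j, 0 < j → j < n → gd ((subOneFirst (S ++ S)).eraseIdx n) j = gd S j := by
    intro j hj0 hj
    rw [gd_eraseIdx_lt hj (by omega), gd_subOneFirst_pos hj0, gd_append (by omega)]
  have gdge : ∀ j, n ≤ j → j < 2 * n - 1 →
      gd ((subOneFirst (S ++ S)).eraseIdx n) j = gd S (j + 1 - n) := by
    intro j h1 h2
    rw [gd_eraseIdx_ge h1 (by omega), gd_subOneFirst_pos (by omega),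
      gd_append_right' (by omega)]
    congr 1
    omega
  have bdiff : ∀ (ε ε' : ZMod q), ε = ε' + 1 → ∀ k, 0 < k → k ≤ n - 1 →
      (Bd ε ((subOneFirst (S ++ S)).eraseIdx n) k ↔ Bd ε' S k) := by
    intro ε ε' hε k hk hkn
    unfold Bd
    rw [hU, hS]
    have i1 : gd ((subOneFirst (S ++ S)).eraseIdx n) (2 * n - 1 - k) = gd S (n - k) := by
      rw [gdge _ (by omega) (by omega)]; congr 1; omega
    have i2 : ∀ i, 0 < i → i < k →
        gd ((subOneFirst (S ++ S)).eraseIdx n) (2 * n - 1 - k + i) = gd S (n - k + i) := by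
      intro i hi1 hi2
      rw [gdge _ (by omega) (by omega)]; congr 1; omega
    have i3 : ∀ i, 0 < i → i < k → gd ((subOneFirst (S ++ S)).eraseIdx n) i = gd S i :=
      fun i hi0 hi => gdlt i hi0 (by omega)
    constructor
    · rintro ⟨a, b⟩
      refine ⟨?_, fun i p1 p2 => by rw [← i2 i p1 p2, b i p1 p2, i3 i p1 p2]⟩
      rw [i1, gd0, hε] at a
      rw [a]; ring
    · rintro ⟨a, b⟩
      refine ⟨?_, fun i p1 p2 => ?_⟩
      · rw [i1, gd0, hε, a]; ring
      · rw [i2 i p1 p2, i3 i p1 p2]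
        exact b i p1 p2
  rw [OU_iff_half]
  unfold OUm
  constructor
  · intro h k hk hkm
    rw [hS] at hkm
    intro hb
    apply h k hk (by rw [hU]; omega)
    rcases hb with hb | hb
    · exact Or.inr ((bdiff 1 0 (by ring) k hk (by omega)).mpr hb)
    · exact Or.inl ((bdiff 0 (-1) (by ring) k hk (by omega)).mpr hb)
  · intro h k hk hkm
    rw [hU] at hkm
    intro hb
    apply h k hk (by omega)
    rcases hb with hb | hb
    · exact Or.inr ((bdiff 0 (-1) (by ring) k hk (by omega)).mp hb)
    · exact Or.inl ((bdiff 1 0 (by ring) k hk (by omega)).mp hb)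

end keylemmas

section recon
variable {q : ℕ}

lemma recon0 {W : List (ZMod q)} {n : ℕ} (hn : 1 ≤ n) (hW : W.length = 2 * n)
    (hb : Bd 0 W n) : W = W.take n ++ W.take n := by
  have htake : (W.take n).length = n := by rw [List.length_take, hW]; omega
  have per : ∀ j, j < n → gd W (n + j) = gd W j := by
    intro j hj
    rcases Nat.eq_zero_or_pos j with rfl | hj0
    · have h1 := hb.1
      rw [hW] at h1
      simpa [show 2 * n - n = n by omega] using h1
    · have h1 := hb.2 j hj0 hj
      rw [hW] at h1
      simpa [show 2 * n - n = n by omega] using h1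
  apply ext_gd
  · rw [List.length_append, htake, hW]; omega
  · intro i hi
    rcases Nat.lt_or_ge i n with h | h
    · rw [gd_append (by rw [htake]; omega), gd_take h]
    · rw [gd_append_right' (by rw [htake]; omega), htake, gd_take (show i - n < n by omega)]
      conv_lhs => rw [show i = n + (i - n) by omega]
      exact per (i - n) (by omega)

lemma recon1 {W : List (ZMod q)} {n : ℕ} (hn : 1 ≤ n) (hW : W.length = 2 * n)
    (hb : Bd 1 W n) : W = subOneFirst (W.drop n ++ W.drop n) := by
  have hdrop : (W.drop n).length = n := by rw [List.length_drop, hW]; omega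
  have hne : W.drop n ++ W.drop n ≠ [] := by
    intro e
    have := congrArg List.length e
    rw [List.length_append, hdrop] at this
    simp at this
    omega
  have per0 : gd W n = gd W 0 + 1 := by
    have h1 := hb.1
    rw [hW] at h1
    simpa [show 2 * n - n = n by omega] using h1
  have per : ∀ j, 0 < j → j < n → gd W (n + j) = gd W j := by
    intro j hj0 hj
    have h1 := hb.2 j hj0 hj
    rw [hW] at h1
    simpa [show 2 * n - n = n by omega] using h1
  apply ext_gd
  · rw [hW, length_subOneFirst, List.length_append, hdrop]; omega
  · intro i hi
    rcases Nat.eq_zero_or_pos i with rfl | hi0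
    · rw [gd_subOneFirst_zero hne, gd_append (by rw [hdrop]; omega), gd_drop,
        Nat.add_zero, per0]
      ring
    · rcases Nat.lt_or_ge i n with h | h
      · rw [gd_subOneFirst_pos hi0, gd_append (by rw [hdrop]; omega), gd_drop]
        exact (per i hi0 h).symm
      · rw [gd_subOneFirst_pos hi0, gd_append_right' (by rw [hdrop]; omega), hdrop, gd_drop]
        congr 1
        omega

lemma bd0_SS {S : List (ZMod q)} {n : ℕ} (hn : 1 ≤ n) (hS : S.length = n) :
    Bd 0 (S ++ S) n := by
  have hSS : (S ++ S).length = 2 * n := by rw [List.length_append, hS]; omega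
  constructor
  · have e : (S ++ S).length - n = n := by rw [hSS]; omega
    rw [e, gd_append_right' (by omega), hS, Nat.sub_self, gd_append (by omega), add_zero]
  · intro i hi0 hin
    have e : (S ++ S).length - n + i = S.length + i := by rw [hSS, hS]; omega
    rw [e, gd_append_right, gd_append (by omega)]

lemma bd1_sub {S : List (ZMod q)} {n : ℕ} (hn : 1 ≤ n) (hS : S.length = n) :
    Bd 1 (subOneFirst (S ++ S)) n := by
  have hSne : S ++ S ≠ [] := by
    intro e
    have := congrArg List.length e
    rw [List.length_append, hS] at this
    simp at this
    omega
  have hW0 : (subOneFirst (S ++ S)).length = 2 * n := by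
    rw [length_subOneFirst, List.length_append, hS]; omega
  constructor
  · have e : (subOneFirst (S ++ S)).length - n = n := by rw [hW0]; omega
    rw [e, gd_subOneFirst_pos (by omega), gd_append_right' (by omega), hS, Nat.sub_self,
      gd_subOneFirst_zero hSne, gd_append (by omega)]
    ring
  · intro i hi0 hin
    have e : (subOneFirst (S ++ S)).length - n + i = S.length + i := by rw [hW0, hS]; omega
    rw [e, gd_subOneFirst_pos (by omega), gd_append_right, gd_subOneFirst_pos hi0,
      gd_append (by omega)]

lemma bd_disjoint [Fact (1 < q)] {W : List (ZMod q)} {k : ℕ}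
    (h0 : Bd 0 W k) (h1 : Bd 1 W k) : False := by
  have h := h0.1.symm.trans h1.1
  exact zero_ne_one (add_left_cancel h)

lemma drop_subOneFirst {L : List (ZMod q)} {n : ℕ} (hn : 1 ≤ n) :
    (subOneFirst L).drop n = L.drop n := by
  cases n with
  | zero => omega
  | succ m => cases L <;> simp [subOneFirst]

end recon

section steps
variable {q : ℕ}

lemma card_OUm [NeZero q] (n : ℕ) :
    Nat.card {w : List (ZMod q) // w.length = n ∧ OUm w} = countOneUnbordered q n := by
  unfold countOneUnbordered
  apply Nat.card_congr
  exact
    { toFun := fun w => ⟨w.1.map (fun x => -x), by simp [w.2.1], (OU_neg_iff w.1).mpr w.2.2⟩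
      invFun := fun w => ⟨w.1.map (fun x => -x), by simp [w.2.1], by
        have := (OU_neg_iff (w.1.map (fun x => -x))).mp
        rw [NN] at this
        exact this w.2.2⟩
      left_inv := fun w => Subtype.ext (NN w.1)
      right_inv := fun w => Subtype.ext (NN w.1) }

lemma step_even (hq : 2 ≤ q) (n : ℕ) (hn : 1 ≤ n) :
    q * countOneUnbordered q (2 * n - 1) =
      countOneUnbordered q (2 * n) + 2 * countOneUnbordered q n := by
  haveI : NeZero q := ⟨by omega⟩
  haveI : Fact (1 < q) := ⟨by omega⟩
  classical
  -- the big set T of length-2n words whose middle-erasure is 1-unbordered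
  have hT : Nat.card {w : List (ZMod q) // w.length = 2 * n ∧ OneUnbordered (w.eraseIdx n)} =
      q * countOneUnbordered q (2 * n - 1) := by
    have e2 : {w : List (ZMod q) // w.length = 2 * n ∧ OneUnbordered (w.eraseIdx n)} ≃
        {w : List (ZMod q) // w.length = (2 * n - 1) + 1 ∧ OneUnbordered (w.eraseIdx n)} :=
      Equiv.subtypeEquivRight (fun w => by rw [show (2 * n - 1) + 1 = 2 * n by omega])
    rw [Nat.card_congr e2, card_insert (2 * n - 1) n (by omega)]
    rfl
  haveI fT : Finite {w : List (ZMod q) // w.length = 2 * n ∧ OneUnbordered (w.eraseIdx n)} :=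
    finite_words _ _
  -- split off the words with a 1-border of length n
  set T := {w : List (ZMod q) // w.length = 2 * n ∧ OneUnbordered (w.eraseIdx n)} with hTdef
  have esplit : T ≃ {x : T // Bord x.1 n} ⊕ {x : T // ¬ Bord x.1 n} := (Equiv.sumCompl _).symm
  have hgood : Nat.card {x : T // ¬ Bord x.1 n} = countOneUnbordered q (2 * n) := by
    unfold countOneUnbordered
    apply Nat.card_congr
    exact
      { toFun := fun x => ⟨x.1.1, x.1.2.1, (OU_erase_even hn x.1.2.1).mpr ⟨x.1.2.2, x.2⟩⟩
        invFun := fun w => ⟨⟨w.1, w.2.1, ((OU_erase_even hn w.2.1).mp w.2.2).1⟩,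
          ((OU_erase_even hn w.2.1).mp w.2.2).2⟩
        left_inv := fun x => by apply Subtype.ext; apply Subtype.ext; rfl
        right_inv := fun w => by apply Subtype.ext; rfl }
  -- the bad words split into two families
  have esplitbad : {x : T // Bord x.1 n} ≃
      {y : {x : T // Bord x.1 n} // Bd 0 y.1.1 n} ⊕
      {y : {x : T // Bord x.1 n} // ¬ Bd 0 y.1.1 n} := (Equiv.sumCompl _).symm
  have hbad0 : Nat.card {y : {x : T // Bord x.1 n} // Bd 0 y.1.1 n} =
      countOneUnbordered q n := by
    unfold countOneUnbordered
    apply Nat.card_congr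
    refine
      { toFun := fun y => ⟨y.1.1.1.take n, ?_, ?_⟩
        invFun := fun S => ⟨⟨⟨S.1 ++ S.1, by rw [List.length_append, S.2.1]; omega,
            (key0 hn S.2.1).mpr S.2.2⟩, Or.inl (bd0_SS hn S.2.1)⟩, bd0_SS hn S.2.1⟩
        left_inv := fun y => ?_
        right_inv := fun S => ?_ }
    · rw [List.length_take, y.1.1.2.1]; omega
    · have hrec := recon0 hn y.1.1.2.1 y.2
      have hlenS : (y.1.1.1.take n).length = n := by rw [List.length_take, y.1.1.2.1]; omega
      apply (key0 hn hlenS).mp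
      rw [← hrec]
      exact y.1.1.2.2
    · apply Subtype.ext; apply Subtype.ext; apply Subtype.ext
      exact (recon0 hn y.1.1.2.1 y.2).symm
    · apply Subtype.ext
      exact List.take_left' S.2.1
  have hbad1 : Nat.card {y : {x : T // Bord x.1 n} // ¬ Bd 0 y.1.1 n} =
      countOneUnbordered q n := by
    rw [← card_OUm n]
    apply Nat.card_congr
    have hbd1 : ∀ y : {x : T // Bord x.1 n}, ¬ Bd 0 y.1.1 n → Bd 1 y.1.1 n := by
      rintro ⟨⟨w, hw, hOU⟩, hb⟩ h0'
      rcases hb with hb | hb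
      · exact absurd hb h0'
      · exact hb
    refine
      { toFun := fun y => ⟨y.1.1.1.drop n, ?_, ?_⟩
        invFun := fun S => ⟨⟨⟨subOneFirst (S.1 ++ S.1),
            by rw [length_subOneFirst, List.length_append, S.2.1]; omega,
            (key1 hn S.2.1).mpr S.2.2⟩, Or.inr (bd1_sub hn S.2.1)⟩,
            fun h0 => bd_disjoint h0 (bd1_sub hn S.2.1)⟩
        left_inv := fun y => ?_
        right_inv := fun S => ?_ }
    · rw [List.length_drop, y.1.1.2.1]; omega
    · have hb1 := hbd1 y.1 y.2
      have hrec := recon1 hn y.1.1.2.1 hb1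
      have hlenS : (y.1.1.1.drop n).length = n := by rw [List.length_drop, y.1.1.2.1]; omega
      apply (key1 hn hlenS).mp
      rw [← hrec]
      exact y.1.1.2.2
    · apply Subtype.ext; apply Subtype.ext; apply Subtype.ext
      exact (recon1 hn y.1.1.2.1 (hbd1 y.1 y.2)).symm
    · apply Subtype.ext
      dsimp
      rw [drop_subOneFirst hn, List.drop_left' S.2.1]
  -- assemble
  rw [← hT, Nat.card_congr esplit, Nat.card_sum, Nat.card_congr esplitbad, Nat.card_sum,
    hgood, hbad0, hbad1]
  ring

end steps

/-- For `q ≥ 2`, the counts `b m` of 1-unbordered words of length `m` over `ℤ/qℤ`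
satisfy `b 0 = 1`, `b (2n+1) = q·b (2n)`, and `b (2n) = q·b (2n-1) − 2·b n`
(for `n ≥ 1`). -/
theorem oneUnbordered_count_recursion (q : ℕ) (hq : 2 ≤ q) :
    countOneUnbordered q 0 = 1 ∧
    (∀ n : ℕ, countOneUnbordered q (2 * n + 1) = q * countOneUnbordered q (2 * n)) ∧
    (∀ n : ℕ, 1 ≤ n →
      (countOneUnbordered q (2 * n) : ℤ) =
        q * countOneUnbordered q (2 * n - 1) - 2 * countOneUnbordered q n) := by
  haveI : NeZero q := ⟨by omega⟩
  refine ⟨count_zero, fun n => step_odd n, fun n hn => ?_⟩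
  have h := step_even hq n hn
  have h' : (q : ℤ) * countOneUnbordered q (2 * n - 1) =
      countOneUnbordered q (2 * n) + 2 * countOneUnbordered q n := by exact_mod_cast h
  linarith
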